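/- Let Q be an operator on a finite-dimensional Hilbert space with ‖[Q, Q*]‖ ≤ c, and Φ a unit vector. Set a_m = ⟨Φ, (Q*)^m Q^m Φ⟩. If a_{m-2} ≠ 0 and a_{m-1} ≠ 0 for some m ≥ 2, then a_m/a_{m-1} ≥ a_{m-1}/a_{m-2} - c. -/
import Mathlib


noncomputable section

local notation "⟪" x ", " y "⟫" => @inner ℂ _ _ x y

open ContinuousLinearMap

/-- For an operator `Q` with `‖[Q,Q*]‖ ≤ c`, a unit vector `Φ`, and
`a_m = ⟨Φ, (Q*)^m Q^m Φ⟩`, if `a_{m-2} ≠ 0` and `a_{m-1} ≠ 0` for some `m ≥ 2`,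
then `a_m/a_{m-1} ≥ a_{m-1}/a_{m-2} - c`. -/
theorem stmt6 (n : ℕ)
    (Q : EuclideanSpace ℂ (Fin n) →L[ℂ] EuclideanSpace ℂ (Fin n))
    (c : ℝ) (hc : ‖Q * adjoint Q - adjoint Q * Q‖ ≤ c)
    (Φ : EuclideanSpace ℂ (Fin n)) (hΦ : ‖Φ‖ = 1)
    (a : ℕ → ℝ) (ha : ∀ m : ℕ, a m = (⟪Φ, ((adjoint Q) ^ m * Q ^ m) Φ⟫).re)
    (m : ℕ) (hm : 2 ≤ m) (h2 : a (m - 2) ≠ 0) (h1 : a (m - 1) ≠ 0) :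
    a (m - 1) / a (m - 2) - c ≤ a m / a (m - 1) := by
  obtain ⟨k, rfl⟩ : ∃ k, m = k + 2 := ⟨m - 2, by omega⟩
  have hk2 : k + 2 - 2 = k := by omega
  have hk1 : k + 2 - 1 = k + 1 := by omega
  rw [hk2] at h2 ⊢
  rw [hk1] at h1 ⊢
  have key : ∀ j : ℕ, a j = ‖(Q ^ j) Φ‖ ^ 2 := by
    intro j
    rw [ha j]
    have hadj : (adjoint Q) ^ j = adjoint (Q ^ j) := by
      rw [← ContinuousLinearMap.star_eq_adjoint, ← ContinuousLinearMap.star_eq_adjoint,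
        ← star_pow]
    rw [hadj, ContinuousLinearMap.mul_apply, ContinuousLinearMap.adjoint_inner_right,
      inner_self_eq_norm_sq_to_K]
    norm_cast
  set ψ := (Q ^ k) Φ with hψ
  set u := Q ψ with hu
  have hpow1 : (Q ^ (k + 1)) Φ = u := by
    rw [pow_succ']; rfl
  have hpow2 : (Q ^ (k + 2)) Φ = Q u := by
    have h0 : Q ^ (k + 2) = Q * Q ^ (k + 1) := by rw [← pow_succ']
    rw [h0, ContinuousLinearMap.mul_apply, hpow1]
  have hak : a k = ‖ψ‖ ^ 2 := key k
  have hak1 : a (k + 1) = ‖u‖ ^ 2 := by rw [key, hpow1]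
  have hak2 : a (k + 2) = ‖Q u‖ ^ 2 := by rw [key, hpow2]
  -- Step A : ‖u‖² ≤ ‖ψ‖ * ‖Q* u‖
  have hA : ‖u‖ ^ 2 ≤ ‖ψ‖ * ‖adjoint Q u‖ := by
    have e0 : (⟪ψ, adjoint Q u⟫).re = ‖u‖ ^ 2 := by
      rw [ContinuousLinearMap.adjoint_inner_right, ← hu, inner_self_eq_norm_sq_to_K]
      norm_cast
    calc ‖u‖ ^ 2 = (⟪ψ, adjoint Q u⟫).re := e0.symm
      _ ≤ ‖⟪ψ, adjoint Q u⟫‖ := Complex.re_le_norm _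
      _ ≤ ‖ψ‖ * ‖adjoint Q u‖ := norm_inner_le_norm ψ (adjoint Q u)
  -- Step B : ‖Q* u‖² ≤ ‖Q u‖² + c * ‖u‖²
  have hB : ‖adjoint Q u‖ ^ 2 ≤ ‖Q u‖ ^ 2 + c * ‖u‖ ^ 2 := by
    have e1 : (‖adjoint Q u‖ : ℝ) ^ 2 = (⟪u, Q (adjoint Q u)⟫).re := by
      rw [← ContinuousLinearMap.adjoint_inner_left Q (adjoint Q u) u,
        inner_self_eq_norm_sq_to_K]
      norm_cast
    have e2 : Q (adjoint Q u) =
        ((Q * adjoint Q - adjoint Q * Q) u) + (adjoint Q) (Q u) := by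
      simp [ContinuousLinearMap.sub_apply, ContinuousLinearMap.mul_apply]
    have e3 : (⟪u, (adjoint Q) (Q u)⟫).re = ‖Q u‖ ^ 2 := by
      rw [ContinuousLinearMap.adjoint_inner_right, inner_self_eq_norm_sq_to_K]
      norm_cast
    set D := Q * adjoint Q - adjoint Q * Q with hD
    have e4 : (⟪u, D u⟫).re ≤ c * ‖u‖ ^ 2 := by
      have h5 : (⟪u, D u⟫).re ≤ ‖⟪u, D u⟫‖ := Complex.re_le_norm _
      have h6 : ‖⟪u, D u⟫‖ ≤ ‖u‖ * ‖D u‖ := norm_inner_le_norm u (D u)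
      have h7 : ‖D u‖ ≤ ‖D‖ * ‖u‖ := D.le_opNorm u
      have h8 : ‖D u‖ ≤ c * ‖u‖ :=
        h7.trans (mul_le_mul_of_nonneg_right hc (norm_nonneg u))
      calc (⟪u, D u⟫).re ≤ ‖⟪u, D u⟫‖ := h5
        _ ≤ ‖u‖ * ‖D u‖ := h6
        _ ≤ ‖u‖ * (c * ‖u‖) := mul_le_mul_of_nonneg_left h8 (norm_nonneg u)
        _ = c * ‖u‖ ^ 2 := by ring
    have e5 : (⟪u, Q (adjoint Q u)⟫).re = (⟪u, D u⟫).re + ‖Q u‖ ^ 2 := by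
      rw [e2, inner_add_right, Complex.add_re, e3]
    linarith [e1, e5, e4]
  have hx : 0 < a k := lt_of_le_of_ne (hak ▸ sq_nonneg _) (Ne.symm h2)
  have hy : 0 < a (k + 1) := lt_of_le_of_ne (hak1 ▸ sq_nonneg _) (Ne.symm h1)
  have hmain : a (k + 1) * a (k + 1) ≤ a k * (a (k + 2) + c * a (k + 1)) := by
    have h9 : ‖u‖ ^ 2 * ‖u‖ ^ 2 ≤ (‖ψ‖ * ‖adjoint Q u‖) * (‖ψ‖ * ‖adjoint Q u‖) :=
      mul_self_le_mul_self (sq_nonneg _) hA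
    have h10 : (‖ψ‖ * ‖adjoint Q u‖) * (‖ψ‖ * ‖adjoint Q u‖)
        = ‖ψ‖ ^ 2 * ‖adjoint Q u‖ ^ 2 := by ring
    have h11 : ‖ψ‖ ^ 2 * ‖adjoint Q u‖ ^ 2
        ≤ ‖ψ‖ ^ 2 * (‖Q u‖ ^ 2 + c * ‖u‖ ^ 2) :=
      mul_le_mul_of_nonneg_left hB (sq_nonneg _)
    rw [hak, hak1, hak2]
    linarith
  rw [sub_le_iff_le_add]
  have hsplit : a (k + 2) / a (k + 1) + c = (a (k + 2) + c * a (k + 1)) / a (k + 1) := by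
    field_simp
  rw [hsplit, div_le_div_iff₀ hx hy]
  linarith [hmain, mul_comm (a k) (a (k + 2) + c * a (k + 1))]
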